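/- Let V be a finite-dimensional real vector space, Λ a lattice in V, and let P and Q be integers greater than 1 that are relatively prime. Let N be a positive integer and let f : V → ℝ be a discretely supported function whose support is contained in PQΛ. Define f_P(x) = f(Px) − f(x) and f_Q(x) = f(Qx) − f(x). If both f_P and f_Q are NΛ-periodic, then there exists a function f' : V → ℝ with f'(x) = f(x) for all x ≠ 0 such that f' is NΛ-periodic. -/

import Mathlib

open Filter Function

/-- `Λ` is a lattice in the finite-dimensional real vector space `V`:
it is the `ℤ`-span of an `ℝ`-basis of `V`. -/
def IsLattice (V : Type*) [NormedAddCommGroup V] [NormedSpace ℝ V]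
    [FiniteDimensional ℝ V] (Λ : Set V) : Prop :=
  ∃ b : Module.Basis (Fin (Module.finrank ℝ V)) ℝ V,
    Λ = (Submodule.span ℤ (Set.range b) : Submodule ℤ V)

/-- `f` is discretely supported: its support has no accumulation points in `V`. -/
def DiscretelySupported {V : Type*} [NormedAddCommGroup V] {α : Type*} [Zero α]
    (f : V → α) : Prop :=
  ∀ x : V, ¬ AccPt x (𝓟 (Function.support f))

/-- `f` is `Λ`-periodic. -/
def IsPeriodic {V : Type*} [AddCommGroup V] {α : Type*} (Λ : Set V) (f : V → α) : Prop :=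
  ∀ x : V, ∀ l ∈ Λ, f (x + l) = f x

/-- For an integer `m`, the set `mΛ = {m • λ | λ ∈ Λ}`. -/
def intMulLattice {V : Type*} [AddCommGroup V] [Module ℝ V] (m : ℤ) (Λ : Set V) : Set V :=
  (fun v => (m : ℝ) • v) '' Λ

/-- **Proposition (rational case).** Let `P, Q > 1` be relatively prime integers, `N` a
positive integer, and `f` discretely supported with support contained in `PQΛ`. If both
`f_P` and `f_Q` are `NΛ`-periodic, then some modification of `f` at `0` is `NΛ`-periodic. -/
theorem periodicity_rational_case
    (V : Type*) [NormedAddCommGroup V] [NormedSpace ℝ V] [FiniteDimensional ℝ V]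
    (Λ : Set V) (hΛ : IsLattice V Λ)
    (P Q : ℤ) (hP : 1 < P) (hQ : 1 < Q) (hPQ : IsCoprime P Q)
    (N : ℤ) (hN : 0 < N)
    (f : V → ℝ) (hf : DiscretelySupported f)
    (hsupp : Function.support f ⊆ intMulLattice (P * Q) Λ)
    (hfP : IsPeriodic (intMulLattice N Λ) (fun x => f ((P : ℝ) • x) - f x))
    (hfQ : IsPeriodic (intMulLattice N Λ) (fun x => f ((Q : ℝ) • x) - f x)) :
    ∃ f' : V → ℝ, (∀ x : V, x ≠ 0 → f' x = f x) ∧ IsPeriodic (intMulLattice N Λ) f' := by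
    classical
  obtain ⟨b, hΛS⟩ := hΛ
  set S : Submodule ℤ V := Submodule.span ℤ (Set.range ⇑b) with hSdef
  have hmemN : ∀ y : V, y ∈ intMulLattice N Λ ↔ ∃ t ∈ S, (N : ℝ) • t = y := by
    intro y
    constructor
    · rintro ⟨t, ht, rfl⟩
      exact ⟨t, by rw [hΛS] at ht; exact ht, rfl⟩
    · rintro ⟨t, ht, rfl⟩
      exact ⟨t, by rw [hΛS]; exact ht, rfl⟩
  have hsuppS : ∀ x : V, f x ≠ 0 → x ∈ S := by
    intro x hx
    obtain ⟨w, hw, hxw⟩ := hsupp hx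
    rw [hΛS] at hw
    have hmem : ((P * Q : ℤ) : ℝ) • w ∈ S := by
      rw [Int.cast_smul_eq_zsmul]
      exact S.smul_mem _ hw
    have hxw' : ((P * Q : ℤ) : ℝ) • w = x := hxw
    rwa [hxw'] at hmem
  -- iterated periodicity of x ↦ f (R^a • x) - f x
  have key : ∀ R : ℤ, IsPeriodic (intMulLattice N Λ) (fun x => f ((R : ℝ) • x) - f x) →
      ∀ a : ℕ, ∀ x t : V, t ∈ S →
        f (((R : ℝ) ^ a) • (x + (N : ℝ) • t)) - f (x + (N : ℝ) • t)
          = f (((R : ℝ) ^ a) • x) - f x := by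
    intro R hR a
    induction a with
    | zero => intro x t ht; simp
    | succ n ih =>
      intro x t ht
      have hstep : ∀ y : V, f ((R : ℝ) ^ (n + 1) • y) - f y
          = (f ((R : ℝ) ^ n • ((R : ℝ) • y)) - f ((R : ℝ) • y)) + (f ((R : ℝ) • y) - f y) := by
        intro y
        have hsm : (R : ℝ) ^ (n + 1) • y = (R : ℝ) ^ n • ((R : ℝ) • y) := by
          rw [smul_smul, ← pow_succ]
        rw [hsm]; ring
      rw [hstep, hstep]
      have hRt : (R : ℝ) • t ∈ S := by
        rw [Int.cast_smul_eq_zsmul]; exact S.smul_mem _ ht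
      have h1 : (R : ℝ) • (x + (N : ℝ) • t) = ((R : ℝ) • x) + (N : ℝ) • ((R : ℝ) • t) := by
        rw [smul_add]; congr 1; exact smul_comm _ _ _
      have hA : f ((R : ℝ) ^ n • ((R : ℝ) • (x + (N : ℝ) • t))) - f ((R : ℝ) • (x + (N : ℝ) • t))
          = f ((R : ℝ) ^ n • ((R : ℝ) • x)) - f ((R : ℝ) • x) := by
        rw [h1]; exact ih ((R : ℝ) • x) ((R : ℝ) • t) hRt
      have hB : f ((R : ℝ) • (x + (N : ℝ) • t)) - f (x + (N : ℝ) • t)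
          = f ((R : ℝ) • x) - f x := by
        simpa using hR x ((N : ℝ) • t) ((hmemN _).mpr ⟨t, ht, rfl⟩)
      linarith
  -- the main tool: values of f at points non-divisible by R^a are periodic mod N·R^a·Λ
  have tool : ∀ R : ℤ, 1 < R →
      (∀ a : ℕ, ∀ x t : V, t ∈ S →
        f (((R : ℝ) ^ a) • (x + (N : ℝ) • t)) - f (x + (N : ℝ) • t)
          = f (((R : ℝ) ^ a) • x) - f x) →
      ∀ (a : ℕ) (y y' : V),
        (¬ ∃ w ∈ S, ((R : ℝ) ^ a) • w = y) → (¬ ∃ w ∈ S, ((R : ℝ) ^ a) • w = y') →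
        (∃ t ∈ S, y' - y = ((N : ℝ) * (R : ℝ) ^ a) • t) → f y = f y' := by
    intro R hR1 hkey a y y' hy hy' hdt
    obtain ⟨t, ht, hdiff⟩ := hdt
    have hR0 : (R : ℝ) ≠ 0 := by
      have : (1 : ℝ) < (R : ℝ) := by exact_mod_cast hR1
      linarith
    have hRa : ((R : ℝ) ^ a) ≠ 0 := pow_ne_zero _ hR0
    set z : V := ((R : ℝ) ^ a)⁻¹ • y with hz
    set z' : V := ((R : ℝ) ^ a)⁻¹ • y' with hz'
    have hyz : ((R : ℝ) ^ a) • z = y := smul_inv_smul₀ hRa y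
    have hyz' : ((R : ℝ) ^ a) • z' = y' := smul_inv_smul₀ hRa y'
    have hfz : f z = 0 := by
      by_contra h
      exact hy ⟨z, hsuppS z h, hyz⟩
    have hfz' : f z' = 0 := by
      by_contra h
      exact hy' ⟨z', hsuppS z' h, hyz'⟩
    have hzz' : z' = z + (N : ℝ) • t := by
      have hsub : z' - z = ((R : ℝ) ^ a)⁻¹ • (y' - y) := by rw [hz, hz', smul_sub]
      rw [hdiff, smul_smul] at hsub
      have hs : ((R : ℝ) ^ a)⁻¹ * ((N : ℝ) * (R : ℝ) ^ a) = (N : ℝ) := by field_simp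
      rw [hs] at hsub
      have := sub_eq_iff_eq_add.mp hsub
      rw [this]; abel
    have hfin := hkey a z t ht
    rw [← hzz', hyz, hyz', hfz, hfz'] at hfin
    linarith
  -- existence of a power escaping divisibility
  have exA : ∀ R : ℤ, 1 < R → ∀ u : V, u ∈ S → u ≠ 0 →
      ∃ a : ℕ, ¬ ∃ w ∈ S, ((R : ℝ) ^ a) • w = u := by
    intro R hR u huS hu
    have hrepr : ∀ x : V, x ∈ S → ∀ i, ∃ c : ℤ, (c : ℝ) = b.repr x i := by
      intro x hx i
      obtain ⟨c, hc⟩ := (b.mem_span_iff_repr_mem ℤ x).mp hx i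
      exact ⟨c, by simpa using hc⟩
    obtain ⟨i, hi⟩ : ∃ i, b.repr u i ≠ 0 := by
      by_contra h
      push_neg at h
      apply hu
      have hz : b.repr u = 0 := Finsupp.ext fun i => h i
      simpa using (LinearEquiv.map_eq_zero_iff b.repr).mp hz
    obtain ⟨c, hc⟩ := hrepr u huS i
    have hc0 : c ≠ 0 := by
      rintro rfl
      exact hi (by simpa using hc.symm)
    refine ⟨c.natAbs, ?_⟩
    rintro ⟨w, hwS, hw⟩
    obtain ⟨d, hd⟩ := hrepr w hwS i
    have hrw : b.repr u i = (R : ℝ) ^ c.natAbs * b.repr w i := by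
      rw [← hw]
      simp [Finsupp.smul_apply]
    have hcast : (c : ℝ) = ((R ^ c.natAbs * d : ℤ) : ℝ) := by
      rw [hc, hrw, ← hd]; push_cast; ring
    have hceq : c = R ^ c.natAbs * d := by exact_mod_cast hcast
    have hd0 : d ≠ 0 := by
      rintro rfl
      rw [mul_zero] at hceq
      exact hc0 hceq
    have hlow : R ^ c.natAbs ≤ |c| := by
      have habs : |c| = R ^ c.natAbs * |d| := by
        nth_rewrite 1 [hceq]
        rw [abs_mul, abs_pow, abs_of_nonneg (by omega : (0:ℤ) ≤ R)]
      have hd1 : (1 : ℤ) ≤ |d| := Int.one_le_abs (by exact_mod_cast hd0)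
      rw [habs]
      exact le_mul_of_one_le_right (pow_nonneg (by omega) _) hd1
    have hhigh : |c| < R ^ c.natAbs := by
      have h2 : (c.natAbs : ℤ) < 2 ^ c.natAbs := by exact_mod_cast (Nat.lt_two_pow_self (n := c.natAbs))
      have h3 : (2 : ℤ) ^ c.natAbs ≤ R ^ c.natAbs := pow_le_pow_left₀ (by norm_num) (by omega) _
      rw [Int.abs_eq_natAbs]
      omega
    omega
  -- main claim: f is constant on nonzero points of each coset of NΛ
  have main : ∀ u v : V, u ≠ 0 → v ≠ 0 → (∃ t ∈ S, v - u = (N : ℝ) • t) → f u = f v := by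
    intro u v hu hv hd
    obtain ⟨t, ht, hvu⟩ := hd
    have hNt : (N : ℝ) • t ∈ S := by
      rw [Int.cast_smul_eq_zsmul]; exact S.smul_mem _ ht
    by_cases huS : u ∈ S
    · have hvS : v ∈ S := by
        have hveq : v = u + (N : ℝ) • t := by rw [← hvu]; abel
        rw [hveq]; exact S.add_mem huS hNt
      obtain ⟨a, ha⟩ := exA P hP u huS hu
      obtain ⟨c, hc⟩ := exA Q hQ v hvS hv
      obtain ⟨α, β, h1⟩ := hPQ.pow (m := a) (n := c)
      have h1R : (α : ℝ) * (P : ℝ) ^ a + (β : ℝ) * (Q : ℝ) ^ c = 1 := by exact_mod_cast h1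
      set w : V := u + ((N * P ^ a * α : ℤ) : ℝ) • t with hwdef
      have hwu : w - u = ((N * P ^ a * α : ℤ) : ℝ) • t := by rw [hwdef]; abel
      have hwv : v - w = ((N * Q ^ c * β : ℤ) : ℝ) • t := by
        have hvw : v - w = ((N : ℝ) - ((N * P ^ a * α : ℤ) : ℝ)) • t := by
          rw [sub_smul, ← hvu, hwdef]; abel
        rw [hvw]; congr 1; push_cast; linear_combination (-(N : ℝ)) * h1R
      have hwP : ¬ ∃ ws ∈ S, ((P : ℝ) ^ a) • ws = w := by
        rintro ⟨ws, hws, hwse⟩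
        apply ha
        refine ⟨ws - ((N * α : ℤ) : ℝ) • t,
          S.sub_mem hws (by rw [Int.cast_smul_eq_zsmul]; exact S.smul_mem _ ht), ?_⟩
        have hsc : ((N * P ^ a * α : ℤ) : ℝ) • t = ((P : ℝ) ^ a) • (((N * α : ℤ) : ℝ) • t) := by
          rw [smul_smul]; congr 1; push_cast; ring
        rw [smul_sub, hwse, hwdef, hsc]; abel
      have hwQ : ¬ ∃ ws ∈ S, ((Q : ℝ) ^ c) • ws = w := by
        rintro ⟨ws, hws, hwse⟩
        apply hc
        refine ⟨ws + ((N * β : ℤ) : ℝ) • t,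
          S.add_mem hws (by rw [Int.cast_smul_eq_zsmul]; exact S.smul_mem _ ht), ?_⟩
        have hsc : ((N * Q ^ c * β : ℤ) : ℝ) • t = ((Q : ℝ) ^ c) • (((N * β : ℤ) : ℝ) • t) := by
          rw [smul_smul]; congr 1; push_cast; ring
        rw [smul_add, hwse, ← hsc, ← hwv]; abel
      have e1 : f u = f w := by
        refine tool P hP (key P hfP) a u w ha hwP ⟨α • t, S.smul_mem _ ht, ?_⟩
        rw [hwu, ← Int.cast_smul_eq_zsmul ℝ α t, smul_smul]
        congr 1; push_cast; ring
      have e2 : f w = f v := by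
        refine tool Q hQ (key Q hfQ) c w v hwQ hc ⟨β • t, S.smul_mem _ ht, ?_⟩
        rw [hwv, ← Int.cast_smul_eq_zsmul ℝ β t, smul_smul]
        congr 1; push_cast; ring
      exact e1.trans e2
    · have hvS : v ∉ S := by
        intro hvS
        apply huS
        have hueq : u = v - (N : ℝ) • t := by rw [← hvu]; abel
        rw [hueq]; exact S.sub_mem hvS hNt
      have h1 : f u = 0 := by by_contra h; exact huS (hsuppS u h)
      have h2 : f v = 0 := by by_contra h; exact hvS (hsuppS v h)
      rw [h1, h2]
  -- assemble f'
  by_cases h0 : ∃ l₀ ∈ intMulLattice N Λ, l₀ ≠ (0 : V)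
  · obtain ⟨l₀, hl₀mem, hl₀⟩ := h0
    obtain ⟨t₀, ht₀, hl₀eq⟩ := (hmemN l₀).mp hl₀mem
    refine ⟨fun x => if x = 0 then f l₀ else f x, fun x hx => if_neg hx, ?_⟩
    intro x l hl
    obtain ⟨t, ht, rfl⟩ := (hmemN l).mp hl
    show (if x + (N : ℝ) • t = 0 then f l₀ else f (x + (N : ℝ) • t)) = (if x = 0 then f l₀ else f x)
    by_cases hx : x = 0
    · subst hx
      rw [zero_add, if_pos rfl]
      by_cases hl0 : (N : ℝ) • t = 0
      · rw [if_pos hl0]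
      · rw [if_neg hl0]
        refine main ((N : ℝ) • t) l₀ hl0 hl₀ ⟨t₀ - t, S.sub_mem ht₀ ht, ?_⟩
        rw [smul_sub, hl₀eq]
    · by_cases hxl : x + (N : ℝ) • t = 0
      · rw [if_pos hxl, if_neg hx]
        refine (main x l₀ hx hl₀ ⟨t₀ + t, S.add_mem ht₀ ht, ?_⟩).symm
        have hxe : x = -((N : ℝ) • t) := by
          have := hxl; rw [add_eq_zero_iff_eq_neg] at this; exact this
        rw [smul_add, hl₀eq, hxe]; abel
      · rw [if_neg hxl, if_neg hx]
        exact (main x (x + (N : ℝ) • t) hx hxl ⟨t, ht, by abel⟩).symm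
  · push_neg at h0
    exact ⟨f, fun x _ => rfl, fun x l hl => by rw [h0 l hl, add_zero]⟩
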